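/- arXiv:1503.08079 — 6 statements merged into one kernel-verified Lean document; each statement's English description precedes it below -/
import Mathlib

section
/- Let G : ℂ² → ℂ be Broughton's example G(z, w) = z + z²w, regarded as a real polynomial map ℂ² ≅ ℝ⁴ → ℝ², and let ρ : ℂ² → ℝ, ρ(z, w) = |w|². Then the Milnor set M_G := { (z, w) ∈ ℂ² : the real Fréchet derivative at (z, w) of the map (G, ρ) : ℂ² → ℂ × ℝ has rank ≤ 2 over ℝ } equals M₁ ∪ M₂, where M₁ = { (z, w) ∈ ℂ² : w = 0 } and M₂ = { (z, w) ∈ ℂ² : 1 + 2zw = 0 }. -/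
open ContinuousLinearMap

noncomputable def Lfirst (z w : ℂ) : ℂ × ℂ →L[ℝ] ℂ :=
  ((ContinuousLinearMap.mul ℝ ℂ (1 + 2*z*w)).comp (fst ℝ ℂ ℂ)) +
  ((ContinuousLinearMap.mul ℝ ℂ (z^2)).comp (snd ℝ ℂ ℂ))

noncomputable def Lsnd (w : ℂ) : ℂ × ℂ →L[ℝ] ℝ :=
  (innerSL ℝ ((2:ℝ) • w)).comp (snd ℝ ℂ ℂ)

noncomputable def LL (z w : ℂ) : ℂ × ℂ →L[ℝ] ℂ × ℝ := (Lfirst z w).prod (Lsnd w)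

lemma hasFDeriv (z w : ℂ) :
    HasFDerivAt (fun q : ℂ × ℂ => (q.1 + q.1 ^ 2 * q.2, ‖q.2‖ ^ 2)) (LL z w) (z, w) := by
  have h1 : HasFDerivAt (fun q : ℂ × ℂ => q.1 + q.1 ^ 2 * q.2) (Lfirst z w) (z, w) := by
    have := (hasFDerivAt_fst (𝕜 := ℝ) (p := ((z, w) : ℂ × ℂ))).add
      (((hasFDerivAt_fst (𝕜 := ℝ) (p := ((z, w) : ℂ × ℂ))).mul
          (hasFDerivAt_fst (𝕜 := ℝ) (p := ((z, w) : ℂ × ℂ)))).mul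
        (hasFDerivAt_snd (𝕜 := ℝ) (p := ((z, w) : ℂ × ℂ))))
    have heq : (fun q : ℂ × ℂ => q.1 + q.1 ^ 2 * q.2)
        = fun q : ℂ × ℂ => q.1 + q.1 * q.1 * q.2 := by
      funext q; ring
    rw [heq]
    refine this.congr_fderiv (Eq.symm ?_)
    refine ContinuousLinearMap.ext fun v => ?_
    obtain ⟨ζ, ω⟩ := v
    simp [Lfirst]
    ring
  have h2 : HasFDerivAt (fun q : ℂ × ℂ => ‖q.2‖ ^ 2) (Lsnd w) (z, w) := by
    have := (hasFDerivAt_snd (𝕜 := ℝ) (p := ((z, w) : ℂ × ℂ))).norm_sq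
    refine this.congr_fderiv (Eq.symm ?_)
    refine ContinuousLinearMap.ext fun v => ?_
    obtain ⟨ζ, ω⟩ := v
    simp [Lsnd, real_inner_smul_left]
    ring
  exact h1.prodMk h2

lemma surj (z w : ℂ) (hw : w ≠ 0) (ha : 1 + 2*z*w ≠ 0) :
    Function.Surjective (LL z w) := by
  rintro ⟨u, t⟩
  have hw2 : ‖w‖ ^ 2 ≠ 0 := pow_ne_zero _ (norm_ne_zero_iff.2 hw)
  set ω : ℂ := (t / (2 * ‖w‖ ^ 2)) • w with hω
  refine ⟨((1 + 2*z*w)⁻¹ * (u - z ^ 2 * ω), ω), ?_⟩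
  have h2 : Lsnd w (((1 + 2*z*w)⁻¹ * (u - z ^ 2 * ω), ω)) = t := by
    show (inner ℝ ((2:ℝ) • w) ω : ℝ) = t
    rw [hω, real_inner_smul_left, real_inner_smul_right, real_inner_self_eq_norm_sq]
    have hne : ‖w‖ ≠ 0 := norm_ne_zero_iff.2 hw
    field_simp
  have h1 : Lfirst z w (((1 + 2*z*w)⁻¹ * (u - z ^ 2 * ω), ω)) = u := by
    show (1 + 2*z*w) * ((1 + 2*z*w)⁻¹ * (u - z ^ 2 * ω)) + z ^ 2 * ω = u
    field_simp
    ring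
  show (Lfirst z w _, Lsnd w _) = (u, t)
  rw [h1, h2]

lemma rank_iff (z w : ℂ) :
    LinearMap.rank (LL z w).toLinearMap ≤ 2 ↔ w = 0 ∨ 1 + 2 * z * w = 0 := by
  constructor
  · intro h
    by_contra hc
    push_neg at hc
    obtain ⟨hw, ha⟩ := hc
    have hsurj := surj z w hw ha
    have hrange : LinearMap.range (LL z w).toLinearMap = ⊤ :=
      LinearMap.range_eq_top.2 hsurj
    rw [LinearMap.rank, hrange] at h
    rw [show Module.rank ℝ (⊤ : Submodule ℝ (ℂ × ℝ)) = Module.rank ℝ (ℂ × ℝ) from rank_top ℝ _,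
      rank_prod', Complex.rank_real_complex, Module.rank_self] at h
    norm_num at h
  · rintro (hw | ha)
    · subst hw
      have heq : (LL z 0).toLinearMap
          = (LinearMap.inl ℝ ℂ ℝ).comp (Lfirst z 0).toLinearMap := by
        refine LinearMap.ext fun v => ?_
        simp [LL, Lsnd]
      calc LinearMap.rank (LL z 0).toLinearMap
          ≤ LinearMap.rank (Lfirst z 0).toLinearMap := by
            rw [heq]; exact LinearMap.rank_comp_le_right _ _
        _ ≤ Module.rank ℝ ℂ := LinearMap.rank_le_range _
        _ = 2 := Complex.rank_real_complex
    · have heq : (LL z w).toLinearMap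
          = (((ContinuousLinearMap.mul ℝ ℂ (z ^ 2)).prod
              (innerSL ℝ ((2:ℝ) • w))).toLinearMap).comp (LinearMap.snd ℝ ℂ ℂ) := by
        refine LinearMap.ext fun v => ?_
        simp [LL, Lfirst, Lsnd, ha]
      calc LinearMap.rank (LL z w).toLinearMap
          ≤ LinearMap.rank (((ContinuousLinearMap.mul ℝ ℂ (z ^ 2)).prod
              (innerSL ℝ ((2:ℝ) • w))).toLinearMap) := by
            rw [heq]; exact LinearMap.rank_comp_le_left _ _
        _ ≤ Module.rank ℝ ℂ := LinearMap.rank_le_domain _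
        _ = 2 := Complex.rank_real_complex

/-- For Broughton's example `G(z, w) = z + z²w` on `ℂ²` and `ρ(z, w) = |w|²`,
the Milnor set `M_G = { (z, w) : rank_ℝ D(G, ρ)(z, w) ≤ 2 }` equals
`{ w = 0 } ∪ { 1 + 2zw = 0 }`. -/
theorem stmt7 :
    {p : ℂ × ℂ | LinearMap.rank
        (fderiv ℝ (fun q : ℂ × ℂ => (q.1 + q.1 ^ 2 * q.2, ‖q.2‖ ^ 2)) p).toLinearMap ≤ 2} =
      {p : ℂ × ℂ | p.2 = 0} ∪ {p : ℂ × ℂ | 1 + 2 * p.1 * p.2 = 0} := by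
  ext ⟨z, w⟩
  simp only [Set.mem_setOf_eq, Set.mem_union]
  rw [(hasFDeriv z w).fderiv]
  exact rank_iff z w
end

section
/- Let G : ℂ² → ℂ be Broughton's example G(z, w) = z + z²w, let φ(z, w) = 1/(1 + |w|²), and let M₂ = { (z, w) ∈ ℂ² : 1 + 2zw = 0 }. Then the image of M₂ under the map (z, w) ↦ (G(z, w), φ(z, w)) ∈ ℂ × ℝ equals the punctured cone { (α, t) ∈ ℂ × ℝ : 0 < t < 1 and |α|² = t/(16(1 − t)) }. In particular, on M₂ one has G(z, w) = −1/(4w), and writing r = |w| the image point satisfies |α|² = 1/(16r²) and t = 1/(1 + r²), so the image is a 2-dimensional open cone whose closure adds the vertex 0 and which is asymptotic to the plane t = 1. -/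
lemma aux_G (p : ℂ × ℂ) (h : 1 + 2 * p.1 * p.2 = 0) :
    p.1 + p.1 ^ 2 * p.2 = -1 / (4 * p.2) := by
  have hw : p.2 ≠ 0 := by
    intro hw; rw [hw] at h; simp at h
  field_simp
  linear_combination (1 + 2 * p.1 * p.2) * h

/-- For Broughton's example `G(z, w) = z + z²w` and `φ(z, w) = 1/(1 + |w|²)`,
the image of `M₂ = {1 + 2zw = 0}` under `(G, φ)` is the punctured open cone
`{ (α, t) : 0 < t < 1, |α|² = t/(16(1 - t)) }`; in particular `G = -1/(4w)` on `M₂`. -/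
theorem stmt8 :
    ((fun p : ℂ × ℂ => (p.1 + p.1 ^ 2 * p.2, 1 / (1 + ‖p.2‖ ^ 2))) ''
        {p : ℂ × ℂ | 1 + 2 * p.1 * p.2 = 0}) =
      {q : ℂ × ℝ | 0 < q.2 ∧ q.2 < 1 ∧ ‖q.1‖ ^ 2 = q.2 / (16 * (1 - q.2))} ∧
    ∀ p : ℂ × ℂ, 1 + 2 * p.1 * p.2 = 0 →
      p.1 + p.1 ^ 2 * p.2 = -1 / (4 * p.2) := by
  constructor
  · ext ⟨α, t⟩
    simp only [Set.mem_image, Set.mem_setOf_eq, Prod.mk.injEq]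
    constructor
    · rintro ⟨⟨z, w⟩, h, hα, ht⟩
      simp only at h hα ht
      have hw : w ≠ 0 := by intro hw; rw [hw] at h; simp at h
      have hwn : (0:ℝ) < ‖w‖ := norm_pos_iff.mpr hw
      have hG : z + z ^ 2 * w = -1 / (4 * w) := aux_G (z, w) h
      have hnα : ‖α‖ = 1 / (4 * ‖w‖) := by
        rw [← hα, hG]; rw [norm_div, norm_mul]
        simp [Complex.norm_ofNat]
      have h1 : (0:ℝ) < 1 + ‖w‖ ^ 2 := by positivity
      refine ⟨?_, ?_, ?_⟩
      · rw [← ht]; positivity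
      · rw [← ht, div_lt_one h1]; nlinarith
      · rw [hnα, ← ht]
        field_simp
        ring
    · rintro ⟨ht0, ht1, hα⟩
      have h1t : (0:ℝ) < 1 - t := by linarith
      have hαn : (0:ℝ) < ‖α‖ := by
        have h2 : (0:ℝ) < ‖α‖ ^ 2 := by rw [hα]; positivity
        nlinarith [norm_nonneg α]
      have hα0 : α ≠ 0 := by intro h; rw [h] at hαn; simp at hαn
      refine ⟨(2 * α, -1 / (4 * α)), ?_, ?_, ?_⟩
      · simp only [Set.mem_setOf_eq]
        field_simp
        ring
      · simp only
        field_simp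
        ring
      · simp only [norm_div, norm_neg, norm_one, norm_mul, Complex.norm_ofNat]
        have hA : ‖α‖ ^ 2 = t / (16 * (1 - t)) := hα
        rw [div_pow, one_pow, mul_pow]
        rw [hA]
        field_simp
        ring
  · exact aux_G
end

section
/- Let G : ℂ² → ℂ be Broughton's example G(z, w) = z + z²w and let M_G = M₁ ∪ M₂ with M₁ = { (z, w) : w = 0 } and M₂ = { (z, w) : 1 + 2zw = 0 }. Then the asymptotic set S_G := { α ∈ ℂ : there exists a sequence (z_k, w_k) in M_G with ‖(z_k, w_k)‖ → ∞ and G(z_k, w_k) → α } equals {0}. -/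
open Filter

/-- For Broughton's example `G(z, w) = z + z²w` with Milnor set
`M_G = M₁ ∪ M₂`, `M₁ = {w = 0}`, `M₂ = {1 + 2zw = 0}`, the asymptotic set
`S_G = { α : ∃ (x_k) ⊆ M_G, ‖x_k‖ → ∞, G(x_k) → α }` equals `{0}`. -/
theorem stmt9 :
    {α : ℂ | ∃ x : ℕ → ℂ × ℂ,
      (∀ k, x k ∈ ({p : ℂ × ℂ | p.2 = 0} ∪ {p : ℂ × ℂ | 1 + 2 * p.1 * p.2 = 0})) ∧
      Filter.Tendsto (fun k => ‖x k‖) Filter.atTop Filter.atTop ∧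
      Filter.Tendsto (fun k => (x k).1 + (x k).1 ^ 2 * (x k).2) Filter.atTop (nhds α)} =
    {0} := by
  ext α
  simp only [Set.mem_setOf_eq, Set.mem_singleton_iff]
  constructor
  · rintro ⟨x, hmem, hnorm, hlim⟩
    set C : ℝ := ‖α‖ + 1 with hCdef
    have hC : (0:ℝ) < C := by positivity
    have hb : ∀ᶠ k in atTop, ‖(x k).1 + (x k).1 ^ 2 * (x k).2‖ < C :=
      hlim.norm.eventually_lt_const (lt_add_one ‖α‖)
    have hbig : ∀ᶠ k in atTop, 2 * C < ‖x k‖ := hnorm.eventually_gt_atTop _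
    have h0 : Tendsto (fun k => (x k).1 + (x k).1 ^ 2 * (x k).2) atTop (nhds 0) := by
      rw [tendsto_zero_iff_norm_tendsto_zero]
      apply squeeze_zero' (.of_forall fun k => norm_nonneg _)
        (g := fun k => 1 / ‖x k‖)
      · filter_upwards [hb, hbig] with k hbk hbigk
        set z := (x k).1
        set w := (x k).2
        have hxpos : (0:ℝ) < ‖x k‖ := lt_trans (by positivity) hbigk
        have hmax : ‖x k‖ = max ‖z‖ ‖w‖ := Prod.norm_def (x k)
        rcases hmem k with h1 | h2
        · -- on M₁ : w = 0, contradiction with boundedness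
          exfalso
          have hz : z + z ^ 2 * w = z := by rw [show w = (0:ℂ) from h1]; ring
          have hnz : ‖x k‖ = ‖z‖ := by
            rw [hmax, show w = (0:ℂ) from h1]; simp
          rw [hz] at hbk
          rw [hnz] at hbigk
          nlinarith
        · -- on M₂ : 1 + 2 z w = 0
          have h2' : (1:ℂ) + 2 * z * w = 0 := h2
          have hg : z + z ^ 2 * w = z / 2 := by linear_combination (z / 2) * h2'
          have hzw : ‖z‖ * ‖w‖ = 1 / 2 := by
            have : z * w = -(1/2 : ℂ) := by linear_combination (1/2 : ℂ) * h2'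
            calc ‖z‖ * ‖w‖ = ‖z * w‖ := (norm_mul z w).symm
              _ = 1 / 2 := by rw [this]; simp
          rw [hg] at hbk ⊢
          have hgz : ‖z / 2‖ = ‖z‖ / 2 := by
            rw [norm_div]; simp
          rw [hgz] at hbk ⊢
          -- ‖z‖ < 2C, so ‖w‖ ≥ ‖x k‖
          have hzle : ‖z‖ < 2 * C := by linarith
          have hwge : ‖x k‖ ≤ ‖w‖ := by
            rcases max_cases ‖z‖ ‖w‖ with ⟨h, _⟩ | ⟨h, _⟩
            · exfalso; rw [hmax, h] at hbigk; linarith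
            · rw [hmax, h]
          rw [le_div_iff₀ hxpos]
          nlinarith [norm_nonneg z, norm_nonneg w]
      · have := tendsto_inv_atTop_zero.comp hnorm
        simpa [one_div, Function.comp_def] using this
    exact tendsto_nhds_unique hlim h0
  · rintro rfl
    refine ⟨fun k => (-(1 / (2 * ((k:ℂ) + 1))), (k:ℂ) + 1), ?_, ?_, ?_⟩
    · intro k
      have hk : ((k:ℂ) + 1) ≠ 0 := by norm_cast
      right
      show (1:ℂ) + 2 * (-(1 / (2 * ((k:ℂ) + 1)))) * ((k:ℂ) + 1) = 0
      field_simp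
      ring
    · have hT : Tendsto (fun k : ℕ => (k:ℝ) + 1) atTop atTop := by
        apply tendsto_atTop_add_const_right
        exact tendsto_natCast_atTop_atTop
      refine tendsto_atTop_mono (f := fun k : ℕ => (k:ℝ) + 1) ?_ hT
      intro k
      have h1 : ‖((k:ℂ) + 1)‖ = (k:ℝ) + 1 := by
        rw [show ((k:ℂ) + 1) = ((k + 1 : ℕ) : ℂ) by push_cast; ring]
        rw [Complex.norm_natCast]; push_cast; ring
      calc (k:ℝ) + 1 = ‖((k:ℂ) + 1)‖ := h1.symm
        _ ≤ ‖(-(1 / (2 * ((k:ℂ) + 1))), (k:ℂ) + 1)‖ := by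
            rw [Prod.norm_def]; exact le_max_right _ _
    · rw [tendsto_zero_iff_norm_tendsto_zero]
      apply squeeze_zero' (.of_forall fun k => norm_nonneg _)
        (g := fun k : ℕ => 1 / ((k:ℝ) + 1))
      · apply Filter.Eventually.of_forall
        intro k
        have hk : ((k:ℂ) + 1) ≠ 0 := by norm_cast
        have hg : -(1 / (2 * ((k:ℂ) + 1))) + (-(1 / (2 * ((k:ℂ) + 1)))) ^ 2 * ((k:ℂ) + 1)
            = -(1 / (4 * ((k:ℂ) + 1))) := by
          field_simp; ring
        show ‖-(1 / (2 * ((k:ℂ) + 1))) + (-(1 / (2 * ((k:ℂ) + 1)))) ^ 2 * ((k:ℂ) + 1)‖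
            ≤ 1 / ((k:ℝ) + 1)
        rw [hg]
        have h1 : ‖((k:ℂ) + 1)‖ = (k:ℝ) + 1 := by
          rw [show ((k:ℂ) + 1) = ((k + 1 : ℕ) : ℂ) by push_cast; ring]
          rw [Complex.norm_natCast]; push_cast; ring
        rw [norm_neg, norm_div, norm_mul, h1]
        simp only [norm_one]
        have h4 : ‖(4:ℂ)‖ = 4 := by norm_num [Complex.norm_ofNat]
        rw [h4, div_le_div_iff₀ (by positivity) (by positivity)]
        nlinarith [Nat.cast_nonneg (α := ℝ) k]
      · exact tendsto_one_div_add_atTop_nhds_zero_nat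
end

section
/- Let G : ℂ³ → ℂ² be the polynomial mapping G(z, w, ζ) = (z, zζ² + w), regarded as a real polynomial map ℂ³ ≅ ℝ⁶ → ℝ⁴, and let ρ : ℂ³ → ℝ, ρ(z, w, ζ) = |ζ|². Then the Milnor set M_G := { (z, w, ζ) ∈ ℂ³ : the real Fréchet derivative at (z, w, ζ) of the map (G, ρ) : ℂ³ → ℂ² × ℝ has rank ≤ 4 over ℝ } equals { (z, w, ζ) ∈ ℂ³ : ζ = 0 }. -/
open ContinuousLinearMap

/-- The real derivative of `(G, ρ)` at `(z, w, ζ)`. -/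
noncomputable def DD (z ζ : ℂ) : (ℂ × ℂ × ℂ) →L[ℝ] (ℂ × ℂ) × ℝ :=
  ((fst ℝ ℂ (ℂ × ℂ)).prod
    ((ζ ^ 2 • (fst ℝ ℂ (ℂ × ℂ))) + ((2 * z * ζ) • ((snd ℝ ℂ ℂ).comp (snd ℝ ℂ (ℂ × ℂ)))) +
      ((fst ℝ ℂ ℂ).comp (snd ℝ ℂ (ℂ × ℂ))))).prod
    ((2 * ζ.re) • (Complex.reCLM.comp ((snd ℝ ℂ ℂ).comp (snd ℝ ℂ (ℂ × ℂ)))) +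
     (2 * ζ.im) • (Complex.imCLM.comp ((snd ℝ ℂ ℂ).comp (snd ℝ ℂ (ℂ × ℂ)))))

lemma DD_apply (z ζ : ℂ) (v : ℂ × ℂ × ℂ) :
    DD z ζ v = ((v.1, ζ ^ 2 * v.1 + 2 * z * ζ * v.2.2 + v.2.1),
      2 * ζ.re * v.2.2.re + 2 * ζ.im * v.2.2.im) := by
  simp [DD, smul_eq_mul]

lemma hasD (z w ζ : ℂ) :
    HasFDerivAt (fun q : ℂ × ℂ × ℂ => ((q.1, q.1 * q.2.2 ^ 2 + q.2.1), ‖q.2.2‖ ^ 2))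
      (DD z ζ) (z, w, ζ) := by
  have hfun : (fun q : ℂ × ℂ × ℂ => ((q.1, q.1 * q.2.2 ^ 2 + q.2.1), ‖q.2.2‖ ^ 2)) =
      (fun q : ℂ × ℂ × ℂ => ((q.1, q.1 * (q.2.2 * q.2.2) + q.2.1),
        q.2.2.re * q.2.2.re + q.2.2.im * q.2.2.im)) := by
    funext q
    have : ‖q.2.2‖ ^ 2 = q.2.2.re * q.2.2.re + q.2.2.im * q.2.2.im := by
      rw [Complex.sq_norm, Complex.normSq_apply]
    rw [this, pow_two]
  rw [hfun]
  set s2 : (ℂ × ℂ × ℂ) →L[ℝ] ℂ := (snd ℝ ℂ ℂ).comp (snd ℝ ℂ (ℂ × ℂ)) with hs2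
  have h1 : HasFDerivAt (fun q : ℂ × ℂ × ℂ => q.1) (fst ℝ ℂ (ℂ × ℂ)) (z, w, ζ) :=
    (fst ℝ ℂ (ℂ × ℂ)).hasFDerivAt
  have h2 : HasFDerivAt (fun q : ℂ × ℂ × ℂ => q.2.1)
      ((fst ℝ ℂ ℂ).comp (snd ℝ ℂ (ℂ × ℂ))) (z, w, ζ) :=
    ((fst ℝ ℂ ℂ).comp (snd ℝ ℂ (ℂ × ℂ))).hasFDerivAt
  have h3 : HasFDerivAt (fun q : ℂ × ℂ × ℂ => q.2.2) s2 (z, w, ζ) := s2.hasFDerivAt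
  have hre : HasFDerivAt (fun q : ℂ × ℂ × ℂ => q.2.2.re) (Complex.reCLM.comp s2) (z, w, ζ) :=
    (Complex.reCLM.comp s2).hasFDerivAt
  have him : HasFDerivAt (fun q : ℂ × ℂ × ℂ => q.2.2.im) (Complex.imCLM.comp s2) (z, w, ζ) :=
    (Complex.imCLM.comp s2).hasFDerivAt
  have hsq := h3.mul h3
  have hmul := h1.mul hsq
  have hC := hmul.add h2
  have hR := (hre.mul hre).add (him.mul him)
  have hF := (h1.prodMk hC).prodMk hR
  refine hF.congr_fderiv ?_
  refine ContinuousLinearMap.ext fun v => ?_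
  simp [DD, hs2, smul_eq_mul, Complex.real_smul]
  constructor
  · ring
  · ring

lemma rank5 : Module.rank ℝ ((ℂ × ℂ) × ℝ) = 5 := by
  rw [rank_prod', rank_prod', Complex.rank_real_complex, Module.rank_self]
  norm_num

/-- For `G(z, w, ζ) = (z, zζ² + w) : ℂ³ → ℂ²` and `ρ(z, w, ζ) = |ζ|²`, the
Milnor set `M_G = { (z, w, ζ) : rank_ℝ D(G, ρ)(z, w, ζ) ≤ 4 }` equals `{ ζ = 0 }`. -/
theorem stmt10 :
    {p : ℂ × ℂ × ℂ | LinearMap.rank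
        (fderiv ℝ (fun q : ℂ × ℂ × ℂ =>
          ((q.1, q.1 * q.2.2 ^ 2 + q.2.1), ‖q.2.2‖ ^ 2)) p).toLinearMap ≤ 4} =
      {p : ℂ × ℂ × ℂ | p.2.2 = 0} := by
  ext ⟨z, w, ζ⟩
  simp only [Set.mem_setOf_eq]
  rw [(hasD z w ζ).fderiv]
  constructor
  · intro h
    by_contra hζ
    -- DD z ζ is surjective, so has rank 5
    have hsurj : Function.Surjective ⇑(DD z ζ).toLinearMap := by
      rintro ⟨⟨a, b⟩, c⟩
      have hns : ζ.re * ζ.re + ζ.im * ζ.im ≠ 0 := by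
        have := Complex.normSq_pos.mpr hζ
        rw [Complex.normSq_apply] at this
        linarith
      set t : ℝ := c / (2 * (ζ.re * ζ.re + ζ.im * ζ.im)) with ht
      refine ⟨(a, b - ζ ^ 2 * a - 2 * z * ζ * ((t : ℂ) * ζ), (t : ℂ) * ζ), ?_⟩
      rw [ContinuousLinearMap.coe_coe, DD_apply]
      refine Prod.ext (Prod.ext rfl ?_) ?_
      · ring
      · simp only [Complex.mul_re, Complex.mul_im, Complex.ofReal_re, Complex.ofReal_im]
        field_simp [ht]
        rw [ht, div_eq_mul_inv, mul_inv]
        linear_combination c * mul_inv_cancel₀ hns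
    have hr : LinearMap.rank (DD z ζ).toLinearMap = 5 := by
      rw [LinearMap.rank, LinearMap.range_eq_top.mpr hsurj, rank_top, rank5]
    rw [hr] at h
    norm_num at h
  · intro h
    subst h
    have hfac : (DD z 0).toLinearMap =
        (LinearMap.inl ℝ (ℂ × ℂ) ℝ).comp
          ((LinearMap.fst ℝ ℂ (ℂ × ℂ)).prod
            ((LinearMap.fst ℝ ℂ ℂ).comp (LinearMap.snd ℝ ℂ (ℂ × ℂ)))) := by
      refine LinearMap.ext fun v => ?_
      show DD z 0 v = _
      rw [DD_apply]
      simp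
    rw [hfac]
    calc LinearMap.rank _ ≤ LinearMap.rank (LinearMap.inl ℝ (ℂ × ℂ) ℝ) :=
          LinearMap.rank_comp_le_left _ _
      _ ≤ Module.rank ℝ (ℂ × ℂ) := LinearMap.rank_le_domain _
      _ = 4 := by rw [rank_prod', Complex.rank_real_complex]; norm_num
end

section
/- Let G : ℂ³ → ℂ² be the polynomial mapping G(z, w, ζ) = (z, zζ² + w) and let ρ(z, w, ζ) = |ζ|². Then the asymptotic set S_G := { α ∈ ℂ² : there exists a sequence (x_k) in ℂ³ with the real Fréchet derivative of (G, ρ) at x_k of rank ≤ 4 over ℝ, ‖x_k‖ → ∞, and G(x_k) → α } is empty. -/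
open ContinuousLinearMap

noncomputable def Dsf (q : ℂ × ℂ × ℂ) : (ℂ × ℂ × ℂ) →L[ℝ] (ℂ × ℂ) × ℝ :=
  ((ContinuousLinearMap.fst ℝ ℂ (ℂ × ℂ)).prod
    (q.1 • (q.2.2 • ((ContinuousLinearMap.snd ℝ ℂ ℂ).comp (ContinuousLinearMap.snd ℝ ℂ (ℂ × ℂ))) +
        q.2.2 • ((ContinuousLinearMap.snd ℝ ℂ ℂ).comp (ContinuousLinearMap.snd ℝ ℂ (ℂ × ℂ)))) +
      (q.2.2 ^ 2) • (ContinuousLinearMap.fst ℝ ℂ (ℂ × ℂ)) +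
      (ContinuousLinearMap.fst ℝ ℂ ℂ).comp (ContinuousLinearMap.snd ℝ ℂ (ℂ × ℂ)))).prod
    (2 • (innerSL ℝ q.2.2).comp
      ((ContinuousLinearMap.snd ℝ ℂ ℂ).comp (ContinuousLinearMap.snd ℝ ℂ (ℂ × ℂ))))

lemma hasF (q : ℂ × ℂ × ℂ) :
    HasFDerivAt (fun q : ℂ × ℂ × ℂ => ((q.1, q.1 * q.2.2 ^ 2 + q.2.1), ‖q.2.2‖ ^ 2))
      (Dsf q) q := by
  have hζ : HasFDerivAt (fun q : ℂ × ℂ × ℂ => q.2.2)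
      ((ContinuousLinearMap.snd ℝ ℂ ℂ).comp (ContinuousLinearMap.snd ℝ ℂ (ℂ × ℂ))) q :=
    (hasFDerivAt_snd).comp q hasFDerivAt_snd
  have hw : HasFDerivAt (fun q : ℂ × ℂ × ℂ => q.2.1)
      ((ContinuousLinearMap.fst ℝ ℂ ℂ).comp (ContinuousLinearMap.snd ℝ ℂ (ℂ × ℂ))) q :=
    (hasFDerivAt_fst).comp q hasFDerivAt_snd
  have hz : HasFDerivAt (fun q : ℂ × ℂ × ℂ => q.1)
      (ContinuousLinearMap.fst ℝ ℂ (ℂ × ℂ)) q := hasFDerivAt_fst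
  have hζ2 : HasFDerivAt (fun q : ℂ × ℂ × ℂ => q.2.2 ^ 2)
      (q.2.2 • ((ContinuousLinearMap.snd ℝ ℂ ℂ).comp (ContinuousLinearMap.snd ℝ ℂ (ℂ × ℂ))) +
      q.2.2 • ((ContinuousLinearMap.snd ℝ ℂ ℂ).comp (ContinuousLinearMap.snd ℝ ℂ (ℂ × ℂ)))) q := by
    have h := hζ.mul hζ
    simp only [pow_two]
    exact h
  have hmul := hz.mul hζ2
  have hρ := hζ.norm_sq
  exact (HasFDerivAt.prodMk (HasFDerivAt.prodMk hz ((hmul.add hw))) hρ)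

lemma surjD (q : ℂ × ℂ × ℂ) (hq : q.2.2 ≠ 0) : Function.Surjective (Dsf q) := by
  rintro ⟨⟨a, b⟩, r⟩
  set ζ := q.2.2
  refine ⟨(a, b - (q.1 * (ζ * ((r / (2 * ‖ζ‖ ^ 2)) • ζ) + ζ * ((r / (2 * ‖ζ‖ ^ 2)) • ζ)) +
      ζ ^ 2 * a), (r / (2 * ‖ζ‖ ^ 2)) • ζ), ?_⟩
  have habs : ‖ζ‖ ≠ 0 := norm_ne_zero_iff.mpr hq
  have hinner : (inner ℝ ζ ((r / (2 * ‖ζ‖ ^ 2)) • ζ) : ℝ) = r / 2 := by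
    rw [real_inner_smul_right, real_inner_self_eq_norm_sq]
    have habs' : ‖ζ‖ ≠ 0 := habs
    field_simp
  refine Prod.ext (Prod.ext rfl ?_) ?_
  · simp only [Dsf, ContinuousLinearMap.prod_apply, ContinuousLinearMap.add_apply,
      ContinuousLinearMap.smul_apply, ContinuousLinearMap.comp_apply,
      ContinuousLinearMap.coe_fst', ContinuousLinearMap.coe_snd', smul_eq_mul,
      ContinuousLinearMap.coe_smul', Pi.smul_apply]
    ring
  · simp only [Dsf, ContinuousLinearMap.prod_apply, ContinuousLinearMap.smul_apply,
      ContinuousLinearMap.comp_apply, ContinuousLinearMap.coe_snd', innerSL_apply_apply, hinner]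
    change 2 • inner ℝ ζ ((r / (2 * ‖ζ‖ ^ 2)) • ζ) = r
    rw [hinner, nsmul_eq_mul]
    push_cast
    ring

lemma zeta_eq_zero (q : ℂ × ℂ × ℂ)
    (h : LinearMap.rank (fderiv ℝ (fun q : ℂ × ℂ × ℂ =>
      ((q.1, q.1 * q.2.2 ^ 2 + q.2.1), ‖q.2.2‖ ^ 2)) q).toLinearMap ≤ 4) :
    q.2.2 = 0 := by
  by_contra hq
  rw [(hasF q).fderiv] at h
  have hs : Function.Surjective (Dsf q).toLinearMap := surjD q hq
  have h' : Module.rank ℝ ((ℂ × ℂ) × ℝ) ≤ 4 :=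
    (rank_range_of_surjective _ hs).symm.trans_le h
  have h5 : Module.rank ℝ ((ℂ × ℂ) × ℝ) = 5 := by
    rw [rank_prod', rank_prod', Complex.rank_real_complex, Module.rank_self]
    norm_num
  rw [h5] at h'
  norm_num at h'

/-- For `G(z, w, ζ) = (z, zζ² + w) : ℂ³ → ℂ²` and `ρ(z, w, ζ) = |ζ|²`, the
asymptotic set `S_G = { α : ∃ (x_k) in the Milnor set Sing(G, ρ) with ‖x_k‖ → ∞ and
G(x_k) → α }` is empty. -/
theorem stmt11 :
    {α : ℂ × ℂ | ∃ x : ℕ → ℂ × ℂ × ℂ,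
      (∀ k, LinearMap.rank (fderiv ℝ (fun q : ℂ × ℂ × ℂ =>
        ((q.1, q.1 * q.2.2 ^ 2 + q.2.1), ‖q.2.2‖ ^ 2)) (x k)).toLinearMap ≤ 4) ∧
      Filter.Tendsto (fun k => ‖x k‖) Filter.atTop Filter.atTop ∧
      Filter.Tendsto (fun k => ((x k).1, (x k).1 * (x k).2.2 ^ 2 + (x k).2.1))
        Filter.atTop (nhds α)} = ∅ := by
  ext α
  simp only [Set.mem_setOf_eq, Set.mem_empty_iff_false, iff_false]
  rintro ⟨x, hrank, hinf, hlim⟩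
  have hz : ∀ k, (x k).2.2 = 0 := fun k => zeta_eq_zero (x k) (hrank k)
  have hnorm : ∀ k, ‖x k‖ = ‖((x k).1, (x k).1 * (x k).2.2 ^ 2 + (x k).2.1)‖ := by
    intro k
    simp [Prod.norm_def, hz k]
  have h1 : Filter.Tendsto (fun k => ‖((x k).1, (x k).1 * (x k).2.2 ^ 2 + (x k).2.1)‖)
      Filter.atTop Filter.atTop := by
    refine hinf.congr fun k => hnorm k
  have h2 : Filter.Tendsto (fun k => ‖((x k).1, (x k).1 * (x k).2.2 ^ 2 + (x k).2.1)‖)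
      Filter.atTop (nhds ‖α‖) := hlim.norm
  exact not_tendsto_atTop_of_tendsto_nhds h2 h1
end

section
/- Let G : ℂ³ → ℂ² be the polynomial mapping G(z, w, ζ) = (z, zζ² + w) and let ρ(z, w, ζ) = |w|². Then the asymptotic set S_G := { α ∈ ℂ² : there exists a sequence (x_k) in ℂ³ with the real Fréchet derivative of (G, ρ) at x_k of rank ≤ 4 over ℝ, ‖x_k‖ → ∞, and G(x_k) → α } is nonempty; in fact (0, 1) ∈ S_G, as witnessed by the sequence x_k = (1/k², 0, k). -/
set_option synthInstance.maxHeartbeats 1000000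
set_option maxHeartbeats 1000000

open Filter ContinuousLinearMap

lemma stmt12_rank (p : ℂ × ℂ × ℂ) (hp : p.2.1 = 0) :
    LinearMap.rank (fderiv ℝ (fun q : ℂ × ℂ × ℂ =>
      ((q.1, q.1 * q.2.2 ^ 2 + q.2.1), ‖q.2.1‖ ^ 2)) p).toLinearMap ≤ 4 := by
  have hg : HasFDerivAt (fun q : ℂ × ℂ × ℂ => (q.1, q.1 * q.2.2 ^ 2 + q.2.1))
      ((fderiv ℝ (fun q : ℂ × ℂ × ℂ => (q.1, q.1 * q.2.2 ^ 2 + q.2.1)) p)) p := by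
    apply DifferentiableAt.hasFDerivAt
    apply DifferentiableAt.prodMk
    · exact differentiableAt_fst
    · exact ((differentiableAt_fst.mul ((differentiableAt_snd.snd).pow 2))).add
        differentiableAt_snd.fst
  have hρ : HasFDerivAt (fun q : ℂ × ℂ × ℂ => ‖q.2.1‖ ^ 2)
      (0 : (ℂ × ℂ × ℂ) →L[ℝ] ℝ) p := by
    have := (hasFDerivAt_snd.fst (𝕜 := ℝ) (x := p)).norm_sq
    simpa [hp] using this
  have hF := hg.prodMk hρ
  rw [hF.fderiv]
  set L := fderiv ℝ (fun q : ℂ × ℂ × ℂ => (q.1, q.1 * q.2.2 ^ 2 + q.2.1)) p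
  have heq : (L.prod (0 : (ℂ × ℂ × ℂ) →L[ℝ] ℝ)).toLinearMap
      = (LinearMap.inl ℝ (ℂ × ℂ) ℝ).comp L.toLinearMap := rfl
  rw [heq]
  calc LinearMap.rank ((LinearMap.inl ℝ (ℂ × ℂ) ℝ).comp L.toLinearMap)
      ≤ LinearMap.rank L.toLinearMap := LinearMap.rank_comp_le_right _ _
    _ ≤ Module.rank ℝ (ℂ × ℂ) := LinearMap.rank_le_range _
    _ ≤ 4 := by
        rw [rank_prod', Complex.rank_real_complex]
        norm_num

lemma stmt12_norm : Filter.Tendsto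
    (fun k : ℕ => ‖(((((k : ℂ)) ^ 2)⁻¹, (0 : ℂ), (k : ℂ)) : ℂ × ℂ × ℂ)‖)
    Filter.atTop Filter.atTop := by
  apply tendsto_atTop_mono (f := fun k : ℕ => (k : ℝ))
  · intro k
    calc (k : ℝ) = ‖(k : ℂ)‖ := by
          rw [Complex.norm_natCast]
      _ ≤ ‖(((0 : ℂ), (k : ℂ)) : ℂ × ℂ)‖ := norm_snd_le (((0 : ℂ), (k : ℂ)) : ℂ × ℂ)
      _ ≤ _ := norm_snd_le ((((((k : ℂ)) ^ 2)⁻¹, ((0 : ℂ), (k : ℂ))) : ℂ × ℂ × ℂ))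
  · exact tendsto_natCast_atTop_atTop

lemma stmt12_lim : Filter.Tendsto (fun k : ℕ =>
      (((((k : ℂ)) ^ 2)⁻¹ : ℂ), ((((k : ℂ)) ^ 2)⁻¹ * ((k : ℂ)) ^ 2 + 0 : ℂ)))
    Filter.atTop (nhds (((0 : ℂ), (1 : ℂ)) : ℂ × ℂ)) := by
  apply Filter.Tendsto.prodMk_nhds
  · have h : Filter.Tendsto (fun k : ℕ => ((k : ℂ))⁻¹) Filter.atTop (nhds 0) := by
      have := tendsto_inv_atTop_zero.comp
        (tendsto_natCast_atTop_atTop (R := ℝ))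
      have h2 : Filter.Tendsto (fun k : ℕ => ((((k : ℝ))⁻¹ : ℝ) : ℂ))
          Filter.atTop (nhds (((0 : ℝ) : ℂ))) :=
        (Complex.continuous_ofReal.tendsto _).comp this
      simpa [Complex.ofReal_inv, Complex.ofReal_natCast] using h2
    have := (h.mul h).congr (fun k => by rw [← mul_inv, ← sq])
    simpa using this
  · apply Filter.Tendsto.congr' (f₁ := fun _ : ℕ => (1 : ℂ))
    · filter_upwards [Filter.eventually_ge_atTop 1] with k hk
      have hk0 : ((k : ℂ)) ^ 2 ≠ 0 :=
        pow_ne_zero 2 (Nat.cast_ne_zero.mpr (by omega))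
      field_simp
      rw [div_self (Nat.cast_ne_zero.mpr (by omega)), add_zero]
    · exact tendsto_const_nhds

/-- For `G(z, w, ζ) = (z, zζ² + w) : ℂ³ → ℂ²` and `ρ(z, w, ζ) = |w|²`, the
asymptotic set `S_G = { α : ∃ (x_k) in Sing(G, ρ) with ‖x_k‖ → ∞ and G(x_k) → α }` is
nonempty; in fact `(0, 1) ∈ S_G`, as witnessed by the sequence `x_k = (1/k², 0, k)`. -/
theorem stmt12 :
    (∀ k : ℕ, LinearMap.rank (fderiv ℝ (fun q : ℂ × ℂ × ℂ =>
        ((q.1, q.1 * q.2.2 ^ 2 + q.2.1), ‖q.2.1‖ ^ 2))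
        ((((k : ℂ)) ^ 2)⁻¹, (0 : ℂ), (k : ℂ))).toLinearMap ≤ 4) ∧
    Filter.Tendsto (fun k : ℕ => ‖(((((k : ℂ)) ^ 2)⁻¹, (0 : ℂ), (k : ℂ)) : ℂ × ℂ × ℂ)‖)
      Filter.atTop Filter.atTop ∧
    Filter.Tendsto (fun k : ℕ =>
        (((((k : ℂ)) ^ 2)⁻¹ : ℂ), ((((k : ℂ)) ^ 2)⁻¹ * ((k : ℂ)) ^ 2 + 0 : ℂ)))
      Filter.atTop (nhds (((0 : ℂ), (1 : ℂ)) : ℂ × ℂ)) ∧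
    ((0 : ℂ), (1 : ℂ)) ∈ {α : ℂ × ℂ | ∃ x : ℕ → ℂ × ℂ × ℂ,
      (∀ k, LinearMap.rank (fderiv ℝ (fun q : ℂ × ℂ × ℂ =>
        ((q.1, q.1 * q.2.2 ^ 2 + q.2.1), ‖q.2.1‖ ^ 2)) (x k)).toLinearMap ≤ 4) ∧
      Filter.Tendsto (fun k => ‖x k‖) Filter.atTop Filter.atTop ∧
      Filter.Tendsto (fun k => ((x k).1, (x k).1 * (x k).2.2 ^ 2 + (x k).2.1))
        Filter.atTop (nhds α)} ∧
    {α : ℂ × ℂ | ∃ x : ℕ → ℂ × ℂ × ℂ,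
      (∀ k, LinearMap.rank (fderiv ℝ (fun q : ℂ × ℂ × ℂ =>
        ((q.1, q.1 * q.2.2 ^ 2 + q.2.1), ‖q.2.1‖ ^ 2)) (x k)).toLinearMap ≤ 4) ∧
      Filter.Tendsto (fun k => ‖x k‖) Filter.atTop Filter.atTop ∧
      Filter.Tendsto (fun k => ((x k).1, (x k).1 * (x k).2.2 ^ 2 + (x k).2.1))
        Filter.atTop (nhds α)}.Nonempty := by
  have hmem : ((0 : ℂ), (1 : ℂ)) ∈ {α : ℂ × ℂ | ∃ x : ℕ → ℂ × ℂ × ℂ,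
      (∀ k, LinearMap.rank (fderiv ℝ (fun q : ℂ × ℂ × ℂ =>
        ((q.1, q.1 * q.2.2 ^ 2 + q.2.1), ‖q.2.1‖ ^ 2)) (x k)).toLinearMap ≤ 4) ∧
      Filter.Tendsto (fun k => ‖x k‖) Filter.atTop Filter.atTop ∧
      Filter.Tendsto (fun k => ((x k).1, (x k).1 * (x k).2.2 ^ 2 + (x k).2.1))
        Filter.atTop (nhds α)} := by
    refine ⟨fun k : ℕ => (((((k : ℂ)) ^ 2)⁻¹, (0 : ℂ), (k : ℂ)) : ℂ × ℂ × ℂ),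
      fun k => stmt12_rank _ rfl, stmt12_norm, stmt12_lim⟩
  exact ⟨fun k => stmt12_rank _ rfl, stmt12_norm, stmt12_lim, hmem, ⟨_, hmem⟩⟩
end
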